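/- Let f : X → ℝ be L-Lipschitz on a metric space X on which a group G acts, with the action L_G-Lipschitz in the group variable: d(g·x, h·x) ≤ L_G d_G(g,h) for all x, g, h. Suppose f is invariant under a subgroup H, and let ρ be a probability measure supported on G' ∩ U for another subgroup G' and compact set U. Then |∫ f(g·x) dρ(g) − f(x)| ≤ L · L_G · d_Haus(G' ∩ U, H ∩ U), where d_Haus is the Hausdorff distance in (G, d_G). -/

import Mathlib

open MeasureTheory

theorem close_groups_bias_bound (G X : Type*) [Group G] [MetricSpace G]
    [MeasurableSpace G] [BorelSpace G] [MetricSpace X] [MulAction G X]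
    (L LG : ℝ) (hL : 0 ≤ L) (hLG : 0 ≤ LG)
    (f : X → ℝ) (hf : ∀ x y : X, |f x - f y| ≤ L * dist x y)
    (hlip : ∀ (x : X) (g h : G), dist (g • x) (h • x) ≤ LG * dist g h)
    (H G' : Subgroup G) (U : Set G) (hU : IsCompact U) (hone : (1 : G) ∈ U)
    (hinv : ∀ h ∈ H, ∀ x : X, f (h • x) = f x)
    (ρ : Measure G) [IsProbabilityMeasure ρ]
    (hsupp : ρ (((G' : Set G) ∩ U)ᶜ) = 0) :
    ∀ x : X,
      |(∫ g, f (g • x) ∂ρ) - f x| ≤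
        L * LG * Metric.hausdorffDist ((G' : Set G) ∩ U) ((H : Set G) ∩ U) := by
  intro x
  set S : Set G := (G' : Set G) ∩ U with hS
  set T : Set G := (H : Set G) ∩ U with hT
  have hSne : S.Nonempty := ⟨1, G'.one_mem, hone⟩
  have hTne : T.Nonempty := ⟨1, H.one_mem, hone⟩
  have hSb : Bornology.IsBounded S := hU.isBounded.subset Set.inter_subset_right
  have hTb : Bornology.IsBounded T := hU.isBounded.subset Set.inter_subset_right
  have hedist : EMetric.hausdorffEdist S T ≠ ⊤ :=
    Metric.hausdorffEdist_ne_top_of_nonempty_of_bounded hSne hTne hSb hTb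
  set c := L * LG with hc_def
  have hc : 0 ≤ c := mul_nonneg hL hLG
  set HD := Metric.hausdorffDist S T with hHD_def
  have hHD : 0 ≤ HD := Metric.hausdorffDist_nonneg
  -- pointwise bound on S
  have key : ∀ g ∈ S, |f (g • x) - f x| ≤ c * HD := by
    intro g hg
    have hbase : ∀ h ∈ T, |f (g • x) - f x| ≤ c * dist g h := by
      intro h hh
      have h1 : f (h • x) = f x := hinv h hh.1 x
      calc |f (g • x) - f x| = |f (g • x) - f (h • x)| := by rw [h1]
        _ ≤ L * dist (g • x) (h • x) := hf _ _
        _ ≤ L * (LG * dist g h) := mul_le_mul_of_nonneg_left (hlip x g h) hL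
        _ = c * dist g h := by ring
    have hinfnn : 0 ≤ Metric.infDist g T := Metric.infDist_nonneg
    have hinf : |f (g • x) - f x| ≤ c * Metric.infDist g T := by
      rcases eq_or_lt_of_le hc with hc0 | hcpos
      · obtain ⟨h, hh⟩ := hTne
        have hb := hbase h hh
        nlinarith [dist_nonneg (x := g) (y := h)]
      · refine le_of_forall_pos_le_add ?_
        intro ε hε
        obtain ⟨h, hh, hd⟩ := (Metric.infDist_lt_iff hTne).mp
          (show Metric.infDist g T < Metric.infDist g T + ε / c by
            have := div_pos hε hcpos; linarith)
        calc |f (g • x) - f x| ≤ c * dist g h := hbase h hh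
          _ ≤ c * (Metric.infDist g T + ε / c) := by nlinarith
          _ = c * Metric.infDist g T + ε := by field_simp
    have hle : Metric.infDist g T ≤ HD :=
      Metric.infDist_le_hausdorffDist_of_mem hg hedist
    nlinarith
  -- a.e. bound
  have haeS : ∀ᵐ g ∂ρ, g ∈ S := by
    rw [ae_iff]
    exact hsupp
  have hae : ∀ᵐ g ∂ρ, |f (g • x) - f x| ≤ c * HD := by
    filter_upwards [haeS] with g hg using key g hg
  -- continuity
  have hcont : Continuous fun g : G => f (g • x) := by
    apply (LipschitzWith.of_dist_le_mul (K := c.toNNReal)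
      (f := fun g : G => f (g • x)) ?_).continuous
    intro g h
    have h1 : dist (f (g • x)) (f (h • x)) ≤ L * dist (g • x) (h • x) := by
      rw [Real.dist_eq]; exact hf _ _
    have h2 : L * dist (g • x) (h • x) ≤ c * dist g h := by
      calc L * dist (g • x) (h • x) ≤ L * (LG * dist g h) :=
            mul_le_mul_of_nonneg_left (hlip x g h) hL
        _ = c * dist g h := by ring
    have h3 : (c.toNNReal : ℝ) = c := Real.coe_toNNReal c hc
    rw [h3]
    linarith
  have hmeas : AEStronglyMeasurable (fun g : G => f (g • x)) ρ :=
    hcont.aestronglyMeasurable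
  have hint : Integrable (fun g : G => f (g • x)) ρ := by
    refine Integrable.mono' (integrable_const (c * HD + |f x|)) hmeas ?_
    filter_upwards [hae] with g hg
    rw [Real.norm_eq_abs]
    have := abs_sub_abs_le_abs_sub (f (g • x)) (f x)
    linarith [abs_abs_sub_abs_le_abs_sub (f (g • x)) (f x), hg,
      (abs_sub (f (g • x)) (f x))]
  have heq : (∫ g, f (g • x) ∂ρ) - f x = ∫ g, (f (g • x) - f x) ∂ρ := by
    rw [integral_sub hint (integrable_const _), integral_const]
    simp
  rw [heq]
  calc |∫ g, (f (g • x) - f x) ∂ρ| ≤ (c * HD) * (ρ Set.univ).toReal := by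
        rw [← Real.norm_eq_abs]
        exact norm_integral_le_of_norm_le_const (by
          filter_upwards [hae] with g hg; rwa [Real.norm_eq_abs])
      _ = c * HD := by simp
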